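/- arXiv:0912.2534 — 2 statements merged into one kernel-verified Lean document; each statement's English description precedes it below -/
import Mathlib

section
/- Let A ∈ ℝ≥0^{n×n} with λ(A) = 1, and let S ∈ ℝ≥0^{n×n} be the matrix whose entries equal a_{ij} on the edges of a completely reducible subgraph C of the critical graph of A and 0 elsewhere. Then there exists a positive vector z ∈ ℝ>0^n such that, with D = diag(z), the matrix D^{−1}SD is a 0–1 matrix (all entries 0 or 1). -/
open scoped NNReal Classical

namespace MaxAlg

/-- Max-times matrix product over `ℝ≥0`. -/
noncomputable def mmul {n : ℕ} (A B : Fin n → Fin n → ℝ≥0) : Fin n → Fin n → ℝ≥0 :=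
  fun i j => Finset.univ.sup fun k => A i k * B k j

/-- Max-algebraic powers of a matrix, with `mpow A 0` the identity. -/
noncomputable def mpow {n : ℕ} (A : Fin n → Fin n → ℝ≥0) : ℕ → (Fin n → Fin n → ℝ≥0)
  | 0 => fun i j => if i = j then 1 else 0
  | (k+1) => mmul A (mpow A k)

/-- Weight of a walk `p` of length `k` (product of the edge weights). -/
noncomputable def pathWeight {n : ℕ} (A : Fin n → Fin n → ℝ≥0) (k : ℕ)
    (p : Fin (k+1) → Fin n) : ℝ≥0 :=
  ∏ t : Fin k, A (p t.castSucc) (p t.succ)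

/-- `p` is a walk in the edge relation `E`. -/
def IsEPath {n : ℕ} (E : Fin n → Fin n → Prop) (k : ℕ) (p : Fin (k+1) → Fin n) : Prop :=
  ∀ t : Fin k, E (p t.castSucc) (p t.succ)

/-- `j` is reachable from `i` in `E` (possibly by the empty path). -/
def Reach {n : ℕ} (E : Fin n → Fin n → Prop) (i j : Fin n) : Prop :=
  ∃ k, ∃ p : Fin (k+1) → Fin n, IsEPath E k p ∧ p 0 = i ∧ p (Fin.last k) = j

/-- Edge relation of the digraph associated with a nonnegative matrix. -/
def edges {n : ℕ} (A : Fin n → Fin n → ℝ≥0) (i j : Fin n) : Prop := A i j ≠ 0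

/-- Lengths of (positive-length) closed walks through `i` in `E`. -/
def cycLen {n : ℕ} (E : Fin n → Fin n → Prop) (i : Fin n) : Set ℕ :=
  {k | 0 < k ∧ ∃ p : Fin (k+1) → Fin n, IsEPath E k p ∧ p 0 = i ∧ p (Fin.last k) = i}

/-- Lengths of all closed walks in `E`. -/
def allCycLen {n : ℕ} (E : Fin n → Fin n → Prop) : Set ℕ :=
  {k | ∃ i, k ∈ cycLen E i}

/-- The gcd of a set of naturals, characterized by the gcd property. -/
noncomputable def setGcd (S : Set ℕ) : ℕ :=
  sInf {d | (∀ s ∈ S, d ∣ s) ∧ ∀ e : ℕ, (∀ s ∈ S, e ∣ s) → e ∣ d}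

/-- Cyclicity of a (completely reducible) digraph: lcm over the nodes of the
gcd of the cycle lengths through that node. -/
noncomputable def graphCyc {n : ℕ} (E : Fin n → Fin n → Prop) : ℕ :=
  Finset.univ.lcm fun i => if (cycLen E i).Nonempty then setGcd (cycLen E i) else 1

/-- The maximum cycle geometric mean `λ(A)`. -/
noncomputable def mcgm {n : ℕ} (A : Fin n → Fin n → ℝ≥0) : ℝ≥0 :=
  sSup {x | ∃ k : ℕ, 0 < k ∧ k ≤ n ∧ ∃ p : Fin (k+1) → Fin n,
    p 0 = p (Fin.last k) ∧ x = pathWeight A k p ^ ((1 : ℝ) / (k : ℝ))}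

/-- The Kleene star `A* = I ⊕ A ⊕ A² ⊕ ⋯` (entrywise supremum of all powers). -/
noncomputable def kleeneStar {n : ℕ} (A : Fin n → Fin n → ℝ≥0) : Fin n → Fin n → ℝ≥0 :=
  fun i j => ⨆ k : ℕ, mpow A k i j

/-- `(i,j)` is a critical edge: it lies on a cycle attaining `λ(A)`. -/
def IsCriticalEdge {n : ℕ} (A : Fin n → Fin n → ℝ≥0) (i j : Fin n) : Prop :=
  ∃ k : ℕ, 0 < k ∧ k ≤ n ∧ ∃ p : Fin (k+1) → Fin n, p 0 = p (Fin.last k) ∧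
    pathWeight A k p ^ ((1 : ℝ) / (k : ℝ)) = mcgm A ∧
    ∃ t : Fin k, p t.castSucc = i ∧ p t.succ = j

/-- A node lying on a critical cycle of `A`. -/
def IsCriticalNode {n : ℕ} (A : Fin n → Fin n → ℝ≥0) (i : Fin n) : Prop :=
  (∃ j, IsCriticalEdge A i j) ∨ (∃ j, IsCriticalEdge A j i)

/-- A completely reducible subgraph of the critical graph of `A`:
every edge is critical, and every edge can be completed to a cycle of the
subgraph (so each weakly connected part is strongly connected). -/
structure CritSubgraph {n : ℕ} (A : Fin n → Fin n → ℝ≥0) where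
  E : Fin n → Fin n → Prop
  critical : ∀ i j, E i j → IsCriticalEdge A i j
  reducible : ∀ i j, E i j → ∃ k, ∃ p : Fin (k+1) → Fin n,
    IsEPath E k p ∧ p 0 = j ∧ p (Fin.last k) = i

/-- Node set `N_c` of the subgraph. -/
def CritSubgraph.Nc {n : ℕ} {A : Fin n → Fin n → ℝ≥0} (G : CritSubgraph A) (i : Fin n) : Prop :=
  (∃ j, G.E i j) ∨ (∃ j, G.E j i)

/-- The matrix `C`: columns of `(A^γ)*` with indices in `N_c`, other columns zero. -/
noncomputable def Cmat {n : ℕ} (A : Fin n → Fin n → ℝ≥0) (G : CritSubgraph A) :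
    Fin n → Fin n → ℝ≥0 :=
  fun i j => if G.Nc j then kleeneStar (mpow A (graphCyc G.E)) i j else 0

/-- The matrix `R`: rows of `(A^γ)*` with indices in `N_c`, other rows zero. -/
noncomputable def Rmat {n : ℕ} (A : Fin n → Fin n → ℝ≥0) (G : CritSubgraph A) :
    Fin n → Fin n → ℝ≥0 :=
  fun i j => if G.Nc i then kleeneStar (mpow A (graphCyc G.E)) i j else 0

/-- The matrix `S`: the restriction of `A` to the edges of the subgraph. -/
noncomputable def Smat {n : ℕ} (A : Fin n → Fin n → ℝ≥0) (G : CritSubgraph A) :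
    Fin n → Fin n → ℝ≥0 :=
  fun i j => if G.E i j then A i j else 0

/-- The CSR product `P^(t) = C ⊗ S^t ⊗ R`. -/
noncomputable def csr {n : ℕ} (A : Fin n → Fin n → ℝ≥0) (G : CritSubgraph A) (t : ℕ) :
    Fin n → Fin n → ℝ≥0 :=
  mmul (mmul (Cmat A G) (mpow (Smat A G) t)) (Rmat A G)

/-- The strongly connected component (as a node set) of `i` in `E`. -/
def scc {n : ℕ} (E : Fin n → Fin n → Prop) (i : Fin n) : Set (Fin n) :=
  {j | Reach E i j ∧ Reach E j i}

/-- The principal submatrix of `A` on the strongly connected component of `i`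
in `D(A)` (other entries zero). -/
noncomputable def compMat {n : ℕ} (A : Fin n → Fin n → ℝ≥0) (i : Fin n) :
    Fin n → Fin n → ℝ≥0 :=
  fun a b => if a ∈ scc (edges A) i ∧ b ∈ scc (edges A) i then A a b else 0

/-- `λ(i)`: the m.c.g.m. of the component of `D(A)` containing `i`. -/
noncomputable def lamNode {n : ℕ} (A : Fin n → Fin n → ℝ≥0) (i : Fin n) : ℝ≥0 :=
  mcgm (compMat A i)

/-- `i` belongs to a nontrivial component of `D(A)` (it lies on a cycle). -/
def Nontrivial' {n : ℕ} (A : Fin n → Fin n → ℝ≥0) (i : Fin n) : Prop :=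
  (cycLen (edges A) i).Nonempty

/-- `γ`: the lcm of the cyclicities of the critical graphs of the nontrivial
components of `D(A)`. -/
noncomputable def gammaU {n : ℕ} (A : Fin n → Fin n → ℝ≥0) : ℕ :=
  Finset.univ.lcm fun i =>
    if Nontrivial' A i then graphCyc (IsCriticalEdge (compMat A i)) else 1

/-- Max-times matrix-vector product. -/
noncomputable def mvec {n : ℕ} (M : Fin n → Fin n → ℝ≥0) (y : Fin n → ℝ≥0) :
    Fin n → ℝ≥0 :=
  fun a => Finset.univ.sup fun k => M a k * y k

/-- `i` strongly accesses `j`: paths of every sufficiently large length exist. -/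
def StrongAccess {n : ℕ} (E : Fin n → Fin n → Prop) (i j : Fin n) : Prop :=
  ∃ T, ∀ t ≥ T, ∃ p : Fin (t+1) → Fin n, IsEPath E t p ∧ p 0 = i ∧ p (Fin.last t) = j

section Aux
variable {n : ℕ}


/-- weight of a list walk -/
noncomputable def lwgt (A : Fin n → Fin n → ℝ≥0) : List (Fin n) → ℝ≥0
  | [] => 1
  | [_] => 1
  | a :: b :: t => A a b * lwgt A (b :: t)

@[simp] lemma lwgt_nil (A : Fin n → Fin n → ℝ≥0) : lwgt A [] = 1 := rfl
@[simp] lemma lwgt_single (A : Fin n → Fin n → ℝ≥0) (x : Fin n) : lwgt A [x] = 1 := rfl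
@[simp] lemma lwgt_cons_cons (A : Fin n → Fin n → ℝ≥0) (a b : Fin n) (t : List (Fin n)) :
    lwgt A (a :: b :: t) = A a b * lwgt A (b :: t) := rfl

lemma lwgt_append (A : Fin n → Fin n → ℝ≥0) :
    ∀ (a : List (Fin n)) (x : Fin n) (c : List (Fin n)),
      lwgt A (a ++ x :: c) = lwgt A (a ++ [x]) * lwgt A (x :: c)
  | [], x, c => by simp
  | [y], x, c => by simp [mul_assoc]
  | y :: z :: a, x, c => by
    simp only [List.cons_append, lwgt_cons_cons]
    rw [show z :: (a ++ x :: c) = (z :: a) ++ x :: c from rfl,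
      show z :: (a ++ [x]) = (z :: a) ++ [x] from rfl,
      lwgt_append A (z :: a) x c, mul_assoc]

lemma lwgt_mono {A B : Fin n → Fin n → ℝ≥0} (h : ∀ i j, A i j ≤ B i j) :
    ∀ l : List (Fin n), lwgt A l ≤ lwgt B l
  | [] => le_refl _
  | [_] => le_refl _
  | a :: b :: t => mul_le_mul' (h a b) (lwgt_mono h (b :: t))

lemma head?_append_cons (a : List (Fin n)) (x : Fin n) (c c' : List (Fin n)) :
    (a ++ x :: c).head? = (a ++ x :: c').head? := by cases a <;> simp

lemma eq_concat_of_getLast? : ∀ {l : List (Fin n)} {w : Fin n},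
    l.getLast? = some w → ∃ e, l = e ++ [w]
  | [], w => by simp
  | [x], w => fun h => ⟨[], by simpa using by simpa using h⟩
  | x :: y :: t, w => fun h => by
    obtain ⟨e, he⟩ := eq_concat_of_getLast? (l := y :: t) (by simpa using h)
    exact ⟨x :: e, by simp [he]⟩

lemma eq_cons_of_head? : ∀ {l : List (Fin n)} {w : Fin n},
    l.head? = some w → ∃ e, l = w :: e
  | [], w => by simp
  | x :: t, w => fun h => ⟨t, by simpa using by simpa using h⟩

lemma not_nodup_decomp {α : Type*} : ∀ (l : List α), ¬ l.Nodup →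
    ∃ (a : List α) (x : α) (b c : List α), l = a ++ x :: (b ++ x :: c)
  | [], h => absurd List.nodup_nil h
  | y :: t, h => by
    rw [List.nodup_cons] at h
    push_neg at h
    by_cases hy : y ∈ t
    · obtain ⟨b, c, rfl⟩ := List.append_of_mem hy
      exact ⟨[], y, b, c, rfl⟩
    · obtain ⟨a, x, b, c, rfl⟩ := not_nodup_decomp t (h hy)
      exact ⟨y :: a, x, b, c, rfl⟩

/-- bridging -/
lemma pathWeight_succ (A : Fin n → Fin n → ℝ≥0) (k : ℕ) (p : Fin (k + 2) → Fin n) :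
    pathWeight A (k+1) p = A (p 0) (p 1) * pathWeight A k (fun t => p t.succ) := by
  unfold pathWeight
  rw [Fin.prod_univ_succ]
  congr 1

lemma lwgt_ofFn (A : Fin n → Fin n → ℝ≥0) :
    ∀ (k : ℕ) (p : Fin (k+1) → Fin n), lwgt A (List.ofFn p) = pathWeight A k p
  | 0, p => by simp [pathWeight, List.ofFn_succ]
  | (k+1), p => by
    have ih := lwgt_ofFn A k (fun t => p t.succ)
    rw [List.ofFn_succ] at ih
    rw [pathWeight_succ, List.ofFn_succ, List.ofFn_succ, lwgt_cons_cons, ih]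
    congr 1

@[simp] lemma head?_ofFn (k : ℕ) (p : Fin (k+1) → Fin n) :
    (List.ofFn p).head? = some (p 0) := by rw [List.ofFn_succ]; rfl

lemma getLast?_ofFn : ∀ (k : ℕ) (p : Fin (k+1) → Fin n),
    (List.ofFn p).getLast? = some (p (Fin.last k))
  | 0, p => by simp [List.ofFn_succ]
  | (k+1), p => by
    rw [List.ofFn_succ, List.getLast?_cons, getLast?_ofFn k (fun i => p i.succ)]
    simp [Fin.succ_last]

lemma chain'_of_isEPath {E : Fin n → Fin n → Prop} {k : ℕ} {p : Fin (k+1) → Fin n}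
    (h : IsEPath E k p) : (List.ofFn p).Chain' E := by
  rw [List.Chain', List.isChain_ofFn]
  intro i hi
  exact h ⟨i, by omega⟩

lemma exists_ofFn_eq (l : List (Fin n)) (hl : l ≠ []) :
    ∃ (k : ℕ) (p : Fin (k+1) → Fin n), List.ofFn p = l := by
  obtain ⟨k, hk⟩ : ∃ k, l.length = k + 1 :=
    ⟨l.length - 1, by have := List.length_pos_iff.mpr hl; omega⟩
  refine ⟨k, fun t => l.get (Fin.cast hk.symm t), ?_⟩
  apply List.ext_get
  · simp [hk]
  · intro i h1 h2
    simp only [List.get_eq_getElem, List.getElem_ofFn]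
    rfl


end Aux

section Main
variable {n : ℕ}

lemma rpow_eq_one_of {w : ℝ≥0} {k : ℕ} (hk : 0 < k) (h : w ^ ((1:ℝ)/(k:ℝ)) = 1) : w = 1 := by
  have hk' : (k : ℝ) ≠ 0 := Nat.cast_ne_zero.mpr hk.ne'
  have h2 : (w ^ ((1:ℝ)/(k:ℝ))) ^ (k:ℝ) = 1 ^ (k:ℝ) := by rw [h]
  rwa [← NNReal.rpow_mul, one_div, inv_mul_cancel₀ hk', NNReal.rpow_one, NNReal.one_rpow] at h2

lemma rpow_le_one_of {w : ℝ≥0} {k : ℕ} (hk : 0 < k) (h : w ^ ((1:ℝ)/(k:ℝ)) ≤ 1) : w ≤ 1 := by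
  have hk' : (k : ℝ) ≠ 0 := Nat.cast_ne_zero.mpr hk.ne'
  have h2 : (w ^ ((1:ℝ)/(k:ℝ))) ^ (k:ℝ) ≤ 1 ^ (k:ℝ) := NNReal.rpow_le_rpow h (by positivity)
  rwa [← NNReal.rpow_mul, one_div, inv_mul_cancel₀ hk', NNReal.rpow_one, NNReal.one_rpow] at h2

lemma mcgm_bddAbove (A : Fin n → Fin n → ℝ≥0) :
    BddAbove {x : ℝ≥0 | ∃ k : ℕ, 0 < k ∧ k ≤ n ∧ ∃ p : Fin (k+1) → Fin n,
      p 0 = p (Fin.last k) ∧ x = pathWeight A k p ^ ((1 : ℝ) / (k : ℝ))} := by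
  apply Set.Finite.bddAbove
  apply Set.Finite.subset (s := ⋃ k ∈ Finset.range (n+1),
    Set.range fun p : Fin (k+1) → Fin n => pathWeight A k p ^ ((1:ℝ)/(k:ℝ)))
  · exact Set.Finite.biUnion (Finset.range (n+1)).finite_toSet fun k _ => Set.finite_range _
  · rintro x ⟨k, hk0, hkn, p, _, rfl⟩
    simp only [Set.mem_iUnion]
    exact ⟨k, Finset.mem_range.mpr (by omega), p, rfl⟩

lemma cycle_pathWeight_le_one {A : Fin n → Fin n → ℝ≥0} (h1 : mcgm A = 1)
    {k : ℕ} (hk0 : 0 < k) (hkn : k ≤ n) {p : Fin (k+1) → Fin n}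
    (hc : p 0 = p (Fin.last k)) : pathWeight A k p ≤ 1 := by
  have hmem : pathWeight A k p ^ ((1:ℝ)/(k:ℝ)) ∈ {x : ℝ≥0 | ∃ k : ℕ, 0 < k ∧ k ≤ n ∧
      ∃ p : Fin (k+1) → Fin n, p 0 = p (Fin.last k) ∧
        x = pathWeight A k p ^ ((1 : ℝ) / (k : ℝ))} := ⟨k, hk0, hkn, p, hc, rfl⟩
  have hle : pathWeight A k p ^ ((1:ℝ)/(k:ℝ)) ≤ 1 := by
    have := le_csSup (mcgm_bddAbove A) hmem
    rwa [show sSup _ = mcgm A from rfl, h1] at this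
  exact rpow_le_one_of hk0 hle

/-- Every closed list walk has `A`-weight at most 1 when `λ(A) = 1`. -/
lemma closed_lwgt_le_one {A : Fin n → Fin n → ℝ≥0} (h1 : mcgm A = 1) :
    ∀ (m : ℕ) (l : List (Fin n)), l.length ≤ m → l.head? = l.getLast? → lwgt A l ≤ 1
  | 0, l => fun h _ => by
    interval_cases h' : l.length
    · rw [List.length_eq_zero_iff] at h'; simp [h']
  | (m+1), l => fun hlen hcl => by
    by_cases htriv : l.length ≤ 1
    · rcases l with _ | ⟨x, _ | ⟨y, t⟩⟩
      · simp
      · simp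
      · simp at htriv
    by_cases hsmall : l.length ≤ n + 1
    · -- bridge to mcgm
      obtain ⟨k, p, hp⟩ := exists_ofFn_eq l (by intro h; subst h; simp at htriv)
      have hk1 : k + 1 = l.length := by rw [← hp]; simp
      have hcl' : p 0 = p (Fin.last k) := by
        have h1' := head?_ofFn k p
        have h2' := getLast?_ofFn k p
        rw [hp] at h1' h2'
        rw [h1', h2'] at hcl
        exact Option.some_injective _ hcl
      rw [← hp, lwgt_ofFn]
      exact cycle_pathWeight_le_one h1 (by omega) (by omega) hcl'
    · -- pigeonhole: extract and remove a subcycle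
      have hn2 : n + 2 ≤ l.length := by omega
      have hnd : ¬ (l.take (n+1)).Nodup := by
        intro hnd
        have := hnd.length_le_card
        rw [List.length_take] at this
        simp [Fintype.card_fin] at this
        omega
      obtain ⟨a, z, b, c₀, habc⟩ := not_nodup_decomp _ hnd
      have hl2 : l = a ++ z :: (b ++ z :: (c₀ ++ l.drop (n+1))) := by
        conv_lhs => rw [← List.take_append_drop (n+1) l]
        rw [habc]; simp
      set c := c₀ ++ l.drop (n+1) with hcdef
      have hc : c ≠ [] := by
        have : l.drop (n+1) ≠ [] := by
          rw [← List.length_pos_iff, List.length_drop]; omega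
        simp [hcdef, this]
      have hlenl : l.length = a.length + b.length + c.length + 2 := by
        conv_lhs => rw [hl2]
        simp; omega
      have htk : (l.take (n+1)).length = n+1 := by
        rw [List.length_take]; omega
      have hablen : a.length + b.length + c₀.length + 2 = n + 1 := by
        rw [habc] at htk; simp at htk; omega
      -- weight splits
      have hw : lwgt A l = lwgt A (z :: (b ++ [z])) * lwgt A (a ++ z :: c) := by
        rw [hl2, lwgt_append A a z (b ++ z :: c),
          show z :: (b ++ z :: c) = (z :: b) ++ z :: c from rfl,
          lwgt_append A (z :: b) z c, lwgt_append A a z c]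
        simp only [List.cons_append]
        ring
      have hmid : lwgt A (z :: (b ++ [z])) ≤ 1 := by
        apply closed_lwgt_le_one h1 m
        · simp; omega
        · rw [show z :: (b ++ [z]) = (z :: b) ++ [z] from rfl, List.getLast?_concat]
          rfl
      have hout : lwgt A (a ++ z :: c) ≤ 1 := by
        apply closed_lwgt_le_one h1 m
        · have : (a ++ z :: c).length = a.length + c.length + 1 := by simp; omega
          omega
        · have hh : (a ++ z :: c).head? = l.head? := by
            conv_rhs => rw [hl2]
            exact head?_append_cons a z c _
          have hg : (a ++ z :: c).getLast? = l.getLast? := by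
            conv_rhs => rw [hl2]
            rw [show a ++ z :: c = (a ++ [z]) ++ c by simp,
              List.getLast?_append_of_ne_nil _ hc,
              show a ++ z :: (b ++ z :: c) = (a ++ z :: b ++ [z]) ++ c by simp,
              List.getLast?_append_of_ne_nil _ hc]
          rw [hh, hg, hcl]
      calc lwgt A l = lwgt A (z :: (b ++ [z])) * lwgt A (a ++ z :: c) := hw
        _ ≤ 1 * 1 := mul_le_mul' hmid hout
        _ = 1 := by simp

/-- A critical edge has a return walk with inverse weight. -/
lemma crit_return {A : Fin n → Fin n → ℝ≥0} (h1 : mcgm A = 1) {u v : Fin n}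
    (h : IsCriticalEdge A u v) :
    ∃ r : List (Fin n), r ≠ [] ∧ r.head? = some v ∧ r.getLast? = some u ∧
      A u v * lwgt A r = 1 := by
  obtain ⟨k, hk0, hkn, p, hcl, hw, t, htu, htv⟩ := h
  have hw1 : lwgt A (List.ofFn p) = 1 := by
    rw [lwgt_ofFn]; exact rpow_eq_one_of hk0 (by rw [hw, h1])
  set l := List.ofFn p with hldef
  have hlen : l.length = k + 1 := by simp [hldef]
  have htlt : (t : ℕ) + 1 < l.length := by rw [hlen]; omega
  have hgu : l[(t:ℕ)]'(by omega) = u := by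
    show (List.ofFn p)[(t:ℕ)]'(by simp) = u
    have h0 : (List.ofFn p)[(t:ℕ)]'(by simp) = p ⟨(t:ℕ), by omega⟩ := by
      rw [List.getElem_ofFn]
    exact h0.trans ((congrArg p (Fin.ext rfl)).trans htu)
  have hgv : l[(t:ℕ)+1]'htlt = v := by
    show (List.ofFn p)[(t:ℕ)+1]'(by simp) = v
    have h0 : (List.ofFn p)[(t:ℕ)+1]'(by simp) = p ⟨(t:ℕ)+1, by omega⟩ := by
      rw [List.getElem_ofFn]
    exact h0.trans ((congrArg p (Fin.ext rfl)).trans htv)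
  have hsplit : l = l.take (t:ℕ) ++ u :: v :: l.drop ((t:ℕ)+2) := by
    conv_lhs => rw [← List.take_append_drop (t:ℕ) l]
    congr 1
    rw [List.drop_eq_getElem_cons (by omega), hgu]
    congr 1
    rw [List.drop_eq_getElem_cons htlt, hgv]
  set a := l.take (t:ℕ) with hadef
  set d := l.drop ((t:ℕ)+2) with hddef
  -- endpoints of l
  have hhead : l.head? = some (p 0) := head?_ofFn k p
  have hlast : l.getLast? = some (p 0) := by rw [hldef, getLast?_ofFn, ← hcl]
  -- v :: d is a nonempty suffix, so it carries the last element
  have hvd_last : (v :: d).getLast? = some (p 0) := by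
    rw [← hlast, hsplit, show a ++ u :: v :: d = (a ++ [u]) ++ (v :: d) by simp,
      List.getLast?_append_of_ne_nil _ (by simp)]
  -- a ++ [u] carries the head
  have hau_head : (a ++ [u]).head? = some (p 0) := by
    rw [← hhead, hsplit]; exact head?_append_cons a u [] (v :: d)
  obtain ⟨s, hs⟩ := eq_cons_of_head? hau_head
  obtain ⟨e, he⟩ := eq_concat_of_getLast? hvd_last
  refine ⟨(v :: d) ++ s, by simp, by simp, ?_, ?_⟩
  · -- getLast of the return walk is u
    rcases s with _ | ⟨w, s'⟩
    · have : u = p 0 := by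
        have := congrArg List.getLast? hs
        simpa [List.getLast?_concat] using this
      simp only [List.append_nil]
      rw [hvd_last, this]
    · rw [List.getLast?_append_of_ne_nil _ (by simp)]
      have := congrArg List.getLast? hs
      simpa [List.getLast?_concat] using this.symm
  · -- weight identity
    have hwl : lwgt A l = lwgt A (a ++ [u]) * (A u v * lwgt A (v :: d)) := by
      rw [hsplit, lwgt_append A a u (v :: d)]
      simp [mul_assoc]
    have hwr : lwgt A ((v :: d) ++ s) = lwgt A (v :: d) * lwgt A (a ++ [u]) := by
      rw [he, hs, show (e ++ [p 0]) ++ s = e ++ (p 0) :: s by simp,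
        lwgt_append A e (p 0) s, ← he, ← hs]
    rw [hwr, ← mul_assoc, show A u v * lwgt A (v :: d) * lwgt A (a ++ [u])
      = lwgt A (a ++ [u]) * (A u v * lwgt A (v :: d)) by ring, ← hwl, hw1]

/-- Any walk in a critical subgraph has a return walk with inverse weight. -/
lemma chain_return {A : Fin n → Fin n → ℝ≥0} (h1 : mcgm A = 1)
    {E : Fin n → Fin n → Prop} (hsub : ∀ i j, E i j → IsCriticalEdge A i j) :
    ∀ l : List (Fin n), l ≠ [] → l.Chain' E →
      ∃ r : List (Fin n), r ≠ [] ∧ r.head? = l.getLast? ∧ r.getLast? = l.head? ∧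
        lwgt A l * lwgt A r = 1
  | [], h, _ => absurd rfl h
  | [x], _, _ => ⟨[x], by simp⟩
  | x :: y :: t, _, hch => by
    rw [List.Chain', List.isChain_cons_cons] at hch
    obtain ⟨r', hr'ne, hr'h, hr'l, hr'w⟩ :=
      chain_return h1 hsub (y :: t) (by simp) hch.2
    obtain ⟨r₀, hr₀ne, hr₀h, hr₀l, hr₀w⟩ := crit_return h1 (hsub x y hch.1)
    obtain ⟨e, he⟩ := eq_concat_of_getLast? (hr'l)
    obtain ⟨s, hs⟩ := eq_cons_of_head? hr₀h
    refine ⟨e ++ y :: s, by simp, ?_, ?_, ?_⟩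
    · rw [show (e ++ y :: s).head? = (e ++ [y]).head? from head?_append_cons e y s [],
        ← he, hr'h]
      rfl
    · rw [show e ++ y :: s = e ++ (y :: s) from rfl,
        List.getLast?_append_of_ne_nil _ (by simp), ← hs, hr₀l]
      rfl
    · have hwr : lwgt A (e ++ y :: s) = lwgt A r' * lwgt A r₀ := by
        rw [lwgt_append A e y s, ← he, ← hs]
      rw [hwr, lwgt_cons_cons]
      calc A x y * lwgt A (y :: t) * (lwgt A r' * lwgt A r₀)
          = (lwgt A (y :: t) * lwgt A r') * (A x y * lwgt A r₀) := by ring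
        _ = 1 := by rw [hr'w, hr₀w, one_mul]

/-- Closed walks in a critical subgraph have weight exactly 1. -/
lemma closed_chain_lwgt_eq_one {A : Fin n → Fin n → ℝ≥0} (h1 : mcgm A = 1)
    {E : Fin n → Fin n → Prop} (hsub : ∀ i j, E i j → IsCriticalEdge A i j)
    {l : List (Fin n)} (hne : l ≠ []) (hch : l.Chain' E)
    (hcl : l.head? = l.getLast?) : lwgt A l = 1 := by
  obtain ⟨r, hrne, hrh, hrl, hrw⟩ := chain_return h1 hsub l hne hch
  have hrcl : r.head? = r.getLast? := by rw [hrh, hrl, hcl]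
  have hr1 : lwgt A r ≤ 1 := closed_lwgt_le_one h1 r.length r le_rfl hrcl
  have hl1 : lwgt A l ≤ 1 := closed_lwgt_le_one h1 l.length l le_rfl hcl
  have : (1 : ℝ≥0) ≤ lwgt A l := by
    calc (1:ℝ≥0) = lwgt A l * lwgt A r := hrw.symm
      _ ≤ lwgt A l * 1 := mul_le_mul' le_rfl hr1
      _ = lwgt A l := mul_one _
  exact le_antisymm hl1 this

lemma Smat_le (A : Fin n → Fin n → ℝ≥0) (G : CritSubgraph A) (i j : Fin n) :
    Smat A G i j ≤ A i j := by
  unfold Smat; split <;> simp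

lemma Smat_eq_of_E {A : Fin n → Fin n → ℝ≥0} {G : CritSubgraph A} {i j : Fin n}
    (h : G.E i j) : Smat A G i j = A i j := if_pos h

/-- Reducing a walk to length at most `n` without decreasing its `S`-weight. -/
lemma reduce {A : Fin n → Fin n → ℝ≥0} (h1 : mcgm A = 1) (G : CritSubgraph A) :
    ∀ (m : ℕ) (l : List (Fin n)), l.length ≤ m → l ≠ [] →
      ∃ l' : List (Fin n), l' ≠ [] ∧ l'.length ≤ n ∧ l'.head? = l.head? ∧
        lwgt (Smat A G) l ≤ lwgt (Smat A G) l'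
  | 0, l => fun h hne => absurd (List.length_eq_zero_iff.mp (by omega)) hne
  | (m+1), l => fun hlen hne => by
    by_cases hsmall : l.length ≤ n
    · exact ⟨l, hne, hsmall, rfl, le_rfl⟩
    · have hnd : ¬ l.Nodup := by
        intro hnd
        have := hnd.length_le_card
        simp [Fintype.card_fin] at this
        omega
      obtain ⟨a, z, b, c, habc⟩ := not_nodup_decomp l hnd
      have hmid : lwgt (Smat A G) (z :: (b ++ [z])) ≤ 1 := by
        refine le_trans (lwgt_mono (Smat_le A G) _) ?_
        apply closed_lwgt_le_one h1 (b.length + 2) _ (by simp)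
        rw [show z :: (b ++ [z]) = (z :: b) ++ [z] from rfl, List.getLast?_concat]
        rfl
      have hw : lwgt (Smat A G) l
          = lwgt (Smat A G) (z :: (b ++ [z])) * lwgt (Smat A G) (a ++ z :: c) := by
        rw [habc, lwgt_append (Smat A G) a z (b ++ z :: c),
          show z :: (b ++ z :: c) = (z :: b) ++ z :: c from rfl,
          lwgt_append (Smat A G) (z :: b) z c, lwgt_append (Smat A G) a z c]
        simp only [List.cons_append]
        ring
      have hlen' : (a ++ z :: c).length ≤ m := by
        have h2 : l.length = a.length + b.length + c.length + 2 := by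
          rw [habc]; simp; omega
        simp; omega
      obtain ⟨l', h1', h2', h3', h4'⟩ := reduce h1 G m (a ++ z :: c) hlen' (by simp)
      refine ⟨l', h1', h2', ?_, ?_⟩
      · rw [h3', habc]
        exact head?_append_cons a z c (b ++ z :: c)
      · calc lwgt (Smat A G) l
            = lwgt (Smat A G) (z :: (b ++ [z])) * lwgt (Smat A G) (a ++ z :: c) := hw
          _ ≤ 1 * lwgt (Smat A G) (a ++ z :: c) := mul_le_mul' hmid le_rfl
          _ = lwgt (Smat A G) (a ++ z :: c) := one_mul _
          _ ≤ lwgt (Smat A G) l' := h4'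

/-- The scaling vector. -/
noncomputable def zvec (A : Fin n → Fin n → ℝ≥0) (G : CritSubgraph A) (i : Fin n) : ℝ≥0 :=
  sSup (lwgt (Smat A G) '' {l : List (Fin n) | l.head? = some i ∧ l.length ≤ n})

lemma zset_finite (A : Fin n → Fin n → ℝ≥0) (G : CritSubgraph A) (i : Fin n) :
    (lwgt (Smat A G) '' {l : List (Fin n) | l.head? = some i ∧ l.length ≤ n}).Finite :=
  Set.Finite.image _ ((List.finite_length_le (Fin n) n).subset fun _ h => h.2)

lemma zset_nonempty (A : Fin n → Fin n → ℝ≥0) (G : CritSubgraph A) (i : Fin n) :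
    (lwgt (Smat A G) '' {l : List (Fin n) | l.head? = some i ∧ l.length ≤ n}).Nonempty :=
  ⟨1, ⟨[i], ⟨rfl, by simpa using Nat.succ_le_of_lt i.pos⟩, rfl⟩⟩

lemma one_le_zvec (A : Fin n → Fin n → ℝ≥0) (G : CritSubgraph A) (i : Fin n) :
    1 ≤ zvec A G i :=
  le_csSup (zset_finite A G i).bddAbove ⟨[i], ⟨rfl, by simpa using Nat.succ_le_of_lt i.pos⟩, rfl⟩

lemma lwgt_le_zvec {A : Fin n → Fin n → ℝ≥0} (h1 : mcgm A = 1) (G : CritSubgraph A)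
    {i : Fin n} {l : List (Fin n)} (h : l.head? = some i) :
    lwgt (Smat A G) l ≤ zvec A G i := by
  have hne : l ≠ [] := by rintro rfl; simp at h
  obtain ⟨l', h1', h2', h3', h4'⟩ := reduce h1 G l.length l le_rfl hne
  exact le_trans h4' (le_csSup (zset_finite A G i).bddAbove ⟨l', ⟨h3'.trans h, h2'⟩, rfl⟩)

lemma exists_zvec_attained (A : Fin n → Fin n → ℝ≥0) (G : CritSubgraph A) (i : Fin n) :
    ∃ l : List (Fin n), l.head? = some i ∧ lwgt (Smat A G) l = zvec A G i := by
  obtain ⟨l, hl, hw⟩ := (zset_nonempty A G i).csSup_mem (zset_finite A G i)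
  exact ⟨l, hl.1, hw⟩

lemma lwgt_Smat_of_chain {A : Fin n → Fin n → ℝ≥0} {G : CritSubgraph A} :
    ∀ {l : List (Fin n)}, l.Chain' G.E → lwgt (Smat A G) l = lwgt A l
  | [], _ => rfl
  | [_], _ => rfl
  | a :: b :: t, h => by
    rw [List.Chain', List.isChain_cons_cons] at h
    rw [lwgt_cons_cons, lwgt_cons_cons, Smat_eq_of_E h.1, lwgt_Smat_of_chain h.2]

end Main

/-- for `A` with `λ(A) = 1` and `S` the restriction of `A` to a
completely reducible subgraph of the critical graph, there is a positive `z`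
such that `D⁻¹ S D` (with `D = diag z`) is a `0-1` matrix. -/
theorem exists_visualising_scaling {n : ℕ} (A : Fin n → Fin n → ℝ≥0)
    (h1 : mcgm A = 1) (G : CritSubgraph A) :
    ∃ z : Fin n → ℝ≥0, (∀ i, 0 < z i) ∧
      ∀ i j, (z i)⁻¹ * Smat A G i j * z j = 0 ∨ (z i)⁻¹ * Smat A G i j * z j = 1 := by
  refine ⟨zvec A G, fun i => lt_of_lt_of_le zero_lt_one (one_le_zvec A G i), ?_⟩
  intro i j
  by_cases hE : G.E i j
  · right
    have hz : Smat A G i j * zvec A G j = zvec A G i := by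
      apply le_antisymm
      · obtain ⟨l, hl, hwl⟩ := exists_zvec_attained A G j
        obtain ⟨e, rfl⟩ := eq_cons_of_head? hl
        calc Smat A G i j * zvec A G j
            = lwgt (Smat A G) (i :: j :: e) := by rw [lwgt_cons_cons, hwl]
          _ ≤ zvec A G i := lwgt_le_zvec h1 G rfl
      · obtain ⟨k, p, hpath, hp0, hpl⟩ := G.reducible i j hE
        set rb := List.ofFn p with hrbdef
        have hch : rb.Chain' G.E := chain'_of_isEPath hpath
        have hrbne : rb ≠ [] := by rw [hrbdef]; simp
        have hrbh : rb.head? = some j := by rw [hrbdef, head?_ofFn, hp0]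
        have hrbl : rb.getLast? = some i := by rw [hrbdef, getLast?_ofFn, hpl]
        have hchi : (i :: rb).Chain' G.E := by
          rw [List.Chain', List.isChain_cons]
          refine ⟨fun y hy => ?_, hch⟩
          · rw [hrbh] at hy
            cases hy
            exact hE
        have hcli : (i :: rb).head? = (i :: rb).getLast? := by
          rw [show i :: rb = [i] ++ rb from rfl, List.getLast?_append_of_ne_nil _ hrbne,
            hrbl]
          rfl
        have h1' : lwgt A (i :: rb) = 1 :=
          closed_chain_lwgt_eq_one h1 G.critical (by simp) hchi hcli
        have h2' : lwgt (Smat A G) (i :: rb) = 1 := by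
          rw [lwgt_Smat_of_chain hchi, h1']
        obtain ⟨rb', hrb'⟩ := eq_cons_of_head? hrbh
        have hkey : Smat A G i j * lwgt (Smat A G) rb = 1 := by
          rw [hrb'] at h2' ⊢
          rw [← lwgt_cons_cons, h2']
        obtain ⟨l, hl, hwl⟩ := exists_zvec_attained A G i
        obtain ⟨tl, rfl⟩ := eq_cons_of_head? hl
        obtain ⟨e, he⟩ := eq_concat_of_getLast? hrbl
        have hjoin : lwgt (Smat A G) (e ++ i :: tl)
            = lwgt (Smat A G) rb * zvec A G i := by
          rw [lwgt_append (Smat A G) e i tl, ← he, hwl]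
        have hjh : (e ++ i :: tl).head? = some j := by
          rw [show (e ++ i :: tl).head? = (e ++ i :: []).head? from head?_append_cons e i tl [],
            show e ++ i :: [] = e ++ [i] from rfl, ← he, hrbh]
        have hle : lwgt (Smat A G) rb * zvec A G i ≤ zvec A G j := by
          rw [← hjoin]
          exact lwgt_le_zvec h1 G hjh
        calc zvec A G i = (Smat A G i j * lwgt (Smat A G) rb) * zvec A G i := by
              rw [hkey, one_mul]
          _ = Smat A G i j * (lwgt (Smat A G) rb * zvec A G i) := by ring
          _ ≤ Smat A G i j * zvec A G j := mul_le_mul' le_rfl hle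
    have hne0 : zvec A G i ≠ 0 := by
      have := one_le_zvec A G i
      intro h0
      rw [h0] at this
      simp at this
    rw [mul_assoc, hz, inv_mul_cancel₀ hne0]
  · left
    rw [show Smat A G i j = 0 from if_neg hE]
    simp

end MaxAlg
end

section
/- Let S be the Boolean (0–1) incidence matrix of a strongly connected digraph G on n nodes with cyclicity γ, and let [i] →_t [j] denote that some (equivalently, every) path from a node of the cyclic class [i] to a node of the cyclic class [j] has length congruent to t mod γ. Then for all sufficiently large t (in particular for t ≥ (n−1)² + 1), the (i,j) entry of the Boolean power S^t equals 1 if [i] →_t [j] and 0 otherwise. -/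
open scoped NNReal Classical

namespace MaxAlg

/-- Nodes in the same cyclic class: connected by a path of length divisible
by the cyclicity `γ`. -/
def SameClass {n : ℕ} (E : Fin n → Fin n → Prop) (γ : ℕ) (i j : Fin n) : Prop :=
  ∃ k, ∃ p : Fin (k+1) → Fin n, IsEPath E k p ∧ p 0 = i ∧ p (Fin.last k) = j ∧ γ ∣ k

/-- `[i] →_t [j]`: some path from a node of the class of `i` to a node of the
class of `j` has length congruent to `t` modulo `γ`. -/
def ClassAccess {n : ℕ} (E : Fin n → Fin n → Prop) (γ t : ℕ) (i j : Fin n) : Prop :=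
  ∃ i' j' : Fin n, SameClass E γ i i' ∧ SameClass E γ j j' ∧
    ∃ k, ∃ p : Fin (k+1) → Fin n, IsEPath E k p ∧ p 0 = i' ∧ p (Fin.last k) = j' ∧
      k ≡ t [MOD γ]

section gcdspec

lemma exists_gcd_elt (S : Set ℕ) :
    ∃ g : ℕ, (∀ s ∈ S, g ∣ s) ∧ (∀ e : ℕ, (∀ s ∈ S, e ∣ s) → e ∣ g) ∧
      (g : ℤ) ∈ AddSubgroup.closure ((↑) '' S : Set ℤ) := by
  obtain ⟨g₀, hH⟩ := Int.subgroup_cyclic (AddSubgroup.closure ((↑) '' S : Set ℤ))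
  refine ⟨g₀.natAbs, ?_, ?_, ?_⟩
  · intro s hs
    have h1 : (s : ℤ) ∈ AddSubgroup.closure ((↑) '' S : Set ℤ) :=
      AddSubgroup.subset_closure (Set.mem_image_of_mem _ hs)
    rw [hH] at h1
    obtain ⟨m, hm⟩ := AddSubgroup.mem_closure_singleton.mp h1
    have : g₀ ∣ (s : ℤ) := ⟨m, by rw [← hm, zsmul_eq_mul, Int.cast_id, mul_comm]⟩
    have := Int.natAbs_dvd_natAbs.mpr this
    simpa using this
  · intro e he
    have hle : AddSubgroup.closure ((↑) '' S : Set ℤ) ≤ AddSubgroup.zmultiples (e : ℤ) := by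
      rw [AddSubgroup.closure_le]
      rintro y ⟨x, hx, rfl⟩
      obtain ⟨k, hk⟩ := he x hx
      exact AddSubgroup.mem_zmultiples_iff.mpr ⟨k, by rw [zsmul_eq_mul]; push_cast [hk]; ring⟩
    have hg₀mem : g₀ ∈ AddSubgroup.closure ((↑) '' S : Set ℤ) := by
      rw [hH]; exact AddSubgroup.mem_closure_singleton.mpr ⟨1, one_zsmul _⟩
    have := hle hg₀mem
    obtain ⟨k, hk⟩ := AddSubgroup.mem_zmultiples_iff.mp this
    have : (e : ℤ) ∣ g₀ := ⟨k, by rw [← hk, zsmul_eq_mul, Int.cast_id, mul_comm]⟩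
    exact Int.natCast_dvd_natCast.mp (Int.dvd_natAbs.mpr this)
  · have hg₀mem : g₀ ∈ AddSubgroup.closure ((↑) '' S : Set ℤ) := by
      rw [hH]; exact AddSubgroup.mem_closure_singleton.mpr ⟨1, one_zsmul _⟩
    rcases Int.natAbs_eq g₀ with h | h
    · rw [← h]; exact hg₀mem
    · have : ((g₀.natAbs : ℤ)) = -g₀ := by omega
      rw [this]; exact AddSubgroup.neg_mem _ hg₀mem

lemma setGcd_spec (S : Set ℕ) :
    (∀ s ∈ S, setGcd S ∣ s) ∧ ∀ e : ℕ, (∀ s ∈ S, e ∣ s) → e ∣ setGcd S := by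
  obtain ⟨g, hg1, hg2, _⟩ := exists_gcd_elt S
  have hset : {d | (∀ s ∈ S, d ∣ s) ∧ ∀ e : ℕ, (∀ s ∈ S, e ∣ s) → e ∣ d} = {g} := by
    apply Set.eq_singleton_iff_unique_mem.mpr
    refine ⟨⟨hg1, hg2⟩, ?_⟩
    rintro d ⟨hd1, hd2⟩
    exact Nat.dvd_antisymm (hg2 d hd1) (hd2 g hg1)
  rw [setGcd, hset, csInf_singleton]
  exact ⟨hg1, hg2⟩

lemma setGcd_mem_closure (S : Set ℕ) :
    ((setGcd S : ℤ)) ∈ AddSubgroup.closure ((↑) '' S : Set ℤ) := by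
  obtain ⟨g, hg1, hg2, hg3⟩ := exists_gcd_elt S
  have : setGcd S = g := by
    obtain ⟨h1, h2⟩ := setGcd_spec S
    exact Nat.dvd_antisymm (hg2 _ h1) (h2 g hg1)
  rw [this]; exact hg3

end gcdspec

section schur

lemma nsmul_mem_of_addclosed {S : Set ℕ} (hadd : ∀ a ∈ S, ∀ b ∈ S, a + b ∈ S)
    {x : ℕ} (hx : x ∈ S) : ∀ m, 0 < m → m * x ∈ S := by
  intro m hm
  induction m with
  | zero => omega
  | succ k ih =>
    rcases Nat.eq_zero_or_pos k with hk | hk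
    · subst hk; simpa using hx
    · have := hadd _ (ih hk) _ hx
      simpa [Nat.succ_mul] using this

lemma combo_mem_of_addclosed {S : Set ℕ} (hadd : ∀ a ∈ S, ∀ b ∈ S, a + b ∈ S)
    {x y : ℕ} (hx : x ∈ S) (hy : y ∈ S) (a b : ℕ) (h : 0 < a + b) :
    a * x + b * y ∈ S := by
  rcases Nat.eq_zero_or_pos a with ha | ha
  · subst ha
    simpa using nsmul_mem_of_addclosed hadd hy b (by omega)
  rcases Nat.eq_zero_or_pos b with hb | hb
  · subst hb
    simpa using nsmul_mem_of_addclosed hadd hx a (by omega)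
  exact hadd _ (nsmul_mem_of_addclosed hadd hx a ha) _ (nsmul_mem_of_addclosed hadd hy b hb)

lemma list_split {S : Set ℕ} (hadd : ∀ a ∈ S, ∀ b ∈ S, a + b ∈ S) :
    ∀ l : List ℤ, (∀ y ∈ l, y ∈ ((↑) '' S : Set ℤ) ∪ -((↑) '' S : Set ℤ)) →
    ∃ P Q : ℕ, (P = 0 ∨ P ∈ S) ∧ (Q = 0 ∨ Q ∈ S) ∧ l.sum = (P : ℤ) - Q := by
  intro l
  induction l with
  | nil => intro _; exact ⟨0, 0, Or.inl rfl, Or.inl rfl, by simp⟩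
  | cons a l ih =>
    intro hmem
    obtain ⟨P, Q, hP, hQ, hsum⟩ := ih (fun y hy => hmem y (List.mem_cons_of_mem a hy))
    rcases hmem a List.mem_cons_self with h | h
    · obtain ⟨x, hx, rfl⟩ := h
      refine ⟨x + P, Q, ?_, hQ, ?_⟩
      · rcases hP with h0 | hPS
        · subst h0; right; simpa using hx
        · right; exact hadd _ hx _ hPS
      · simp only [List.sum_cons, hsum]; push_cast; ring
    · rw [Set.mem_neg] at h
      obtain ⟨x, hx, hxe⟩ := h
      refine ⟨P, x + Q, hP, ?_, ?_⟩
      · rcases hQ with h0 | hQS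
        · subst h0; right; simpa using hx
        · right; exact hadd _ hx _ hQS
      · simp only [List.sum_cons, hsum]
        have : a = -(x : ℤ) := by omega
        rw [this]; push_cast; ring

lemma schur_lemma (S : Set ℕ) (hadd : ∀ a ∈ S, ∀ b ∈ S, a + b ∈ S)
    (hpos : ∀ x ∈ S, 0 < x) (g : ℕ) (hgpos : 0 < g)
    (hg1 : ∀ x ∈ S, g ∣ x) (hg2 : ∀ e : ℕ, (∀ x ∈ S, e ∣ x) → e ∣ g) :
    ∃ N, ∀ c, N ≤ c → g ∣ c → c ∈ S := by
  have hgc : ((g : ℤ)) ∈ AddSubgroup.closure ((↑) '' S : Set ℤ) := by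
    obtain ⟨g', hg'1, hg'2, hg'3⟩ := exists_gcd_elt S
    have : g = g' := Nat.dvd_antisymm (hg'2 g hg1) (hg2 _ hg'1)
    rw [this]; exact hg'3
  have hsub : ((g : ℤ)) ∈ AddSubmonoid.closure (((↑) '' S : Set ℤ) ∪ -((↑) '' S)) := by
    have h2 : ((g:ℤ)) ∈ (AddSubgroup.closure ((↑) '' S : Set ℤ)).toAddSubmonoid := hgc
    rwa [AddSubgroup.closure_toAddSubmonoid] at h2
  obtain ⟨l, hl, hlsum⟩ := AddSubmonoid.exists_list_of_mem_closure hsub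
  obtain ⟨P, Q, hP, hQ, hPQ⟩ := list_split hadd l hl
  rw [hlsum] at hPQ
  have hPQ' : P = Q + g := by omega
  rcases hQ with hQ0 | hQS
  · subst hQ0
    have hPS : P ∈ S := by
      rcases hP with h | h
      · omega
      · exact h
    have hgS : g ∈ S := by rw [hPQ'] at hPS; simpa using hPS
    refine ⟨g, fun c hc hdvd => ?_⟩
    obtain ⟨m, rfl⟩ := hdvd
    have hm : 0 < m := by
      rcases Nat.eq_zero_or_pos m with h | h
      · subst h; simp at hc; omega
      · exact h
    have := nsmul_mem_of_addclosed hadd hgS m hm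
    rwa [Nat.mul_comm] at this
  · have hPS : P ∈ S := by
      rcases hP with h | h
      · omega
      · exact h
    obtain ⟨q, hq⟩ := hg1 Q hQS
    have hQpos : 0 < Q := hpos Q hQS
    have hq1 : 1 ≤ q := by
      rcases Nat.eq_zero_or_pos q with h | h
      · subst h; omega
      · exact h
    refine ⟨Q * Q, fun c hc hdvd => ?_⟩
    obtain ⟨c', rfl⟩ := hdvd
    have hdm : q * (c' / q) + c' % q = c' := Nat.div_add_mod c' q
    set k := c' / q with hk
    set jj := c' % q with hjj
    have hjq : jj < q := Nat.mod_lt _ (by omega)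
    have hc'big : q * q ≤ c' := by
      have h2 : g * (q * q * g) ≤ g * c' := by
        have h1 : Q * Q = g * (q * q * g) := by rw [hq]; ring
        rw [← h1]; exact hc
      have h3 : q * q * g ≤ c' := Nat.le_of_mul_le_mul_left h2 hgpos
      nlinarith
    have hkq : q ≤ k := by nlinarith
    have hjk : jj ≤ k := by omega
    obtain ⟨k', hk'⟩ : ∃ k', k = k' + jj := ⟨k - jj, by omega⟩
    have hrep : (k - jj) * Q + jj * P = g * c' := by
      rw [hk']
      simp only [Nat.add_sub_cancel]
      rw [hPQ', hq, ← hdm, hk']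
      ring
    rw [← hrep]
    exact combo_mem_of_addclosed hadd hQS hPS _ _ (by omega)

end schur


section walks

variable {n : ℕ}

inductive W (E : Fin n → Fin n → Prop) : ℕ → Fin n → Fin n → Prop
  | nil (i : Fin n) : W E 0 i i
  | cons {k : ℕ} {i m j : Fin n} : E i m → W E k m j → W E (k+1) i j

variable {E : Fin n → Fin n → Prop}

lemma W.trans {a : ℕ} {i j : Fin n} (h1 : W E a i j) :
    ∀ {b : ℕ} {l : Fin n}, W E b j l → W E (a + b) i l := by
  induction h1 with
  | nil i => intro b l h2; simpa using h2
  | @cons k i m j e w ih =>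
    intro b l h2
    rw [Nat.add_right_comm]
    exact W.cons e (ih h2)

lemma w_zero_iff {i j : Fin n} : W E 0 i j ↔ i = j := by
  constructor
  · intro h; cases h; rfl
  · rintro rfl; exact W.nil i

lemma w_succ_iff {k : ℕ} {i j : Fin n} : W E (k+1) i j ↔ ∃ m, E i m ∧ W E k m j := by
  constructor
  · intro h; cases h with | cons e w => exact ⟨_, e, w⟩
  · rintro ⟨m, e, w⟩; exact W.cons e w

lemma w_add_iff {a b : ℕ} {i j : Fin n} :
    W E (a + b) i j ↔ ∃ m, W E a i m ∧ W E b m j := by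
  induction a generalizing i with
  | zero =>
    rw [Nat.zero_add]
    constructor
    · intro h; exact ⟨i, W.nil i, h⟩
    · rintro ⟨m, h1, h2⟩; rw [w_zero_iff.mp h1] at *; exact h2
  | succ a ih =>
    rw [show a + 1 + b = (a + b) + 1 from by omega, w_succ_iff]
    constructor
    · rintro ⟨m', e, w⟩
      obtain ⟨m, w1, w2⟩ := ih.mp w
      exact ⟨m, w_succ_iff.mpr ⟨m', e, w1⟩, w2⟩
    · rintro ⟨m, w1, w2⟩
      obtain ⟨m', e, w1'⟩ := w_succ_iff.mp w1
      exact ⟨m', e, ih.mpr ⟨m, w1', w2⟩⟩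

lemma w_iff_path {k : ℕ} {i j : Fin n} :
    W E k i j ↔ ∃ p : Fin (k+1) → Fin n, IsEPath E k p ∧ p 0 = i ∧ p (Fin.last k) = j := by
  constructor
  · intro h
    induction h with
    | nil i => exact ⟨fun _ => i, fun t => t.elim0, rfl, rfl⟩
    | @cons k i m j e w ih =>
      obtain ⟨p, hp, h0, hl⟩ := ih
      refine ⟨Fin.cases i p, ?_, ?_, ?_⟩
      · intro t
        refine Fin.cases ?_ ?_ t
        · simp only [Fin.castSucc_zero, Fin.cases_zero, Fin.cases_succ, h0]
          exact e
        · intro r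
          have h1 : (r.succ).castSucc = (r.castSucc).succ := (Fin.succ_castSucc r).symm
          rw [h1]
          simp only [Fin.cases_succ]
          exact hp r
      · simp
      · rw [← Fin.succ_last]
        simp only [Fin.cases_succ]
        exact hl
  · intro h
    induction k generalizing i with
    | zero =>
      obtain ⟨p, _, h0, hl⟩ := h
      have : i = j := by rw [← h0, ← hl]; rfl
      rw [this]; exact W.nil j
    | succ k ih =>
      obtain ⟨p, hp, h0, hl⟩ := h
      have e : E i (p 1) := by
        have := hp 0
        rw [Fin.castSucc_zero, h0, Fin.succ_zero_eq_one] at this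
        exact this
      refine W.cons e (ih ⟨p ∘ Fin.succ, ?_, ?_, ?_⟩)
      · intro r
        have := hp r.succ
        rw [← Fin.succ_castSucc] at this
        exact this
      · simp [Fin.succ_zero_eq_one]
      · simp only [Function.comp_apply, Fin.succ_last]
        exact hl

lemma seg' {k : ℕ} {p : Fin (k+1) → Fin n} (hp : IsEPath E k p) :
    ∀ (d a : ℕ) (h : a + d ≤ k),
      W E d (p ⟨a, by omega⟩) (p ⟨a + d, by omega⟩) := by
  intro d
  induction d with
  | zero =>
    intro a h
    have : (⟨a + 0, by omega⟩ : Fin (k+1)) = ⟨a, by omega⟩ := by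
      apply Fin.ext; simp
    rw [this]
    exact W.nil _
  | succ d ih =>
    intro a h
    have e : E (p ⟨a, by omega⟩) (p ⟨a + 1, by omega⟩) := by
      have := hp ⟨a, by omega⟩
      have h1 : (⟨a, by omega⟩ : Fin k).castSucc = (⟨a, by omega⟩ : Fin (k+1)) := by
        apply Fin.ext; simp
      have h2 : (⟨a, by omega⟩ : Fin k).succ = (⟨a + 1, by omega⟩ : Fin (k+1)) := by
        apply Fin.ext; simp
      rwa [h1, h2] at this
    have w := ih (a + 1) (by omega)
    have h3 : (⟨a + 1 + d, by omega⟩ : Fin (k+1)) = ⟨a + (d + 1), by omega⟩ := by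
      apply Fin.ext; simp; omega
    rw [h3] at w
    exact W.cons e w

lemma seg {k : ℕ} {p : Fin (k+1) → Fin n} (hp : IsEPath E k p) (a b : ℕ)
    (hab : a ≤ b) (hbk : b ≤ k) :
    W E (b - a) (p ⟨a, by omega⟩) (p ⟨b, by omega⟩) := by
  have := seg' hp (b - a) a (by omega)
  have h1 : (⟨a + (b - a), by omega⟩ : Fin (k+1)) = ⟨b, by omega⟩ := by
    apply Fin.ext; simp; omega
  rwa [h1] at this

lemma w_splice {k : ℕ} {p : Fin (k+1) → Fin n} (hp : IsEPath E k p) {a b : ℕ}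
    (hab : a ≤ b) (hbk : b ≤ k)
    (heq : p ⟨a, by omega⟩ = p ⟨b, by omega⟩) :
    W E (a + (k - b)) (p 0) (p (Fin.last k)) := by
  have h1 : W E (a - 0) (p ⟨0, by omega⟩) (p ⟨a, by omega⟩) := seg hp 0 a (by omega) (by omega)
  have h2 : W E (k - b) (p ⟨b, by omega⟩) (p ⟨k, by omega⟩) := seg hp b k hbk (le_refl k)
  rw [heq] at h1
  have h3 := h1.trans h2
  have e0 : (⟨0, by omega⟩ : Fin (k+1)) = 0 := by apply Fin.ext; simp
  have el : (⟨k, by omega⟩ : Fin (k+1)) = Fin.last k := by apply Fin.ext; simp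
  rw [e0, el] at h3
  simpa using h3

lemma w_split_repeat_aux {k : ℕ} {i j : Fin n} (hk : n < k)
    {p : Fin (k+1) → Fin n} (hp : IsEPath E k p) (h0 : p 0 = i) (hl : p (Fin.last k) = j)
    (a b : ℕ) (ha : a < b) (hb : b ≤ n)
    (heq : p ⟨a, by omega⟩ = p ⟨b, by omega⟩) :
    ∃ (m : ℕ) (x : Fin n), 0 < m ∧ m ≤ n ∧ W E m x x ∧ W E (k - m) i j := by
  refine ⟨b - a, p ⟨a, by omega⟩, by omega, by omega, ?_, ?_⟩
  · have := seg hp a b (by omega) (by omega)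
    rwa [← heq] at this
  · have := w_splice hp (le_of_lt ha) (by omega) heq
    rw [h0, hl] at this
    have harr : a + (k - b) = k - (b - a) := by omega
    rwa [harr] at this

lemma w_split_repeat {k : ℕ} {i j : Fin n} (h : W E k i j) (hk : n < k) :
    ∃ (m : ℕ) (x : Fin n), 0 < m ∧ m ≤ n ∧ W E m x x ∧ W E (k - m) i j := by
  obtain ⟨p, hp, h0, hl⟩ := w_iff_path.mp h
  have hcard : Fintype.card (Fin n) < Fintype.card (Fin (n+1)) := by simp
  obtain ⟨a, b, hab, heq⟩ :=
    Fintype.exists_ne_map_eq_of_card_lt (fun m : Fin (n+1) => p ⟨m.val, by omega⟩) hcard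
  rcases lt_trichotomy a.val b.val with h1 | h1 | h1
  · exact w_split_repeat_aux hk hp h0 hl a.val b.val h1 (by omega) heq
  · exact absurd (Fin.ext h1) hab
  · exact w_split_repeat_aux hk hp h0 hl b.val a.val h1 (by omega) heq.symm

lemma mpow_eq (E : Fin n → Fin n → Prop) (S : Fin n → Fin n → ℝ≥0)
    (hS : ∀ i j, S i j = if E i j then 1 else 0) :
    ∀ (t : ℕ) (i j : Fin n), mpow S t i j = if W E t i j then 1 else 0 := by
  intro t
  induction t with
  | zero =>
    intro i j
    show (if i = j then (1:ℝ≥0) else 0) = _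
    by_cases h : i = j <;> simp [h, w_zero_iff]
  | succ t ih =>
    intro i j
    show mmul S (mpow S t) i j = _
    unfold mmul
    have hterm : ∀ k, S i k * mpow S t k j = if (E i k ∧ W E t k j) then 1 else 0 := by
      intro k; rw [hS, ih]
      split_ifs with h1 h2 h3 h4 h5 <;> simp_all
    by_cases h : W E (t+1) i j
    · rw [if_pos h]
      obtain ⟨m, hm⟩ := w_succ_iff.mp h
      refine le_antisymm (Finset.sup_le fun x _ => by rw [hterm]; split_ifs <;> simp) ?_
      have h2 := Finset.le_sup (f := fun x => S i x * mpow S t x j) (Finset.mem_univ m)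
      rwa [hterm m, if_pos hm] at h2
    · rw [if_neg h]
      refine le_antisymm (Finset.sup_le fun x _ => ?_) zero_le
      rw [hterm x, if_neg (fun hc => h (w_succ_iff.mpr ⟨x, hc⟩))]

lemma seg_both {k : ℕ} {p : Fin (k+1) → Fin n} (hp : IsEPath E k p) (m : ℕ) (hm : m ≤ k) :
    ∃ x, W E m (p 0) x ∧ W E (k - m) x (p (Fin.last k)) := by
  refine ⟨p ⟨m, by omega⟩, ?_, ?_⟩
  · have h2 := seg hp 0 m (by omega) hm
    have h0 : (⟨0, by omega⟩ : Fin (k+1)) = 0 := Fin.ext (by simp)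
    rw [h0] at h2
    simpa using h2
  · have h2 := seg hp m k hm (le_refl k)
    have hl : (⟨k, by omega⟩ : Fin (k+1)) = Fin.last k := Fin.ext (by simp)
    rwa [hl] at h2

lemma two_fams_card {A B : ℕ} (f g : ℕ → Fin n)
    (hf : ∀ a b, a < A → b < A → f a = f b → a = b)
    (hg : ∀ a b, a < B → b < B → g a = g b → a = b)
    (hfg : ∀ a b, a < A → b < B → f a ≠ g b) : A + B ≤ n := by
  set F := (Finset.range A).image f with hF
  set G := (Finset.range B).image g with hG
  have hFcard : F.card = A := by
    rw [hF, Finset.card_image_of_injOn, Finset.card_range]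
    intro a ha b hb hab
    exact hf a b (by simpa using ha) (by simpa using hb) hab
  have hGcard : G.card = B := by
    rw [hG, Finset.card_image_of_injOn, Finset.card_range]
    intro a ha b hb hab
    exact hg a b (by simpa using ha) (by simpa using hb) hab
  have hdisj : Disjoint F G := by
    rw [Finset.disjoint_left]
    rintro x hx hy
    obtain ⟨a, ha, rfl⟩ := Finset.mem_image.mp hx
    obtain ⟨b, hb, hba⟩ := Finset.mem_image.mp hy
    exact hfg a b (by simpa using ha) (by simpa using hb) hba.symm
  calc A + B = (F ∪ G).card := by
        rw [Finset.card_union_of_disjoint hdisj, hFcard, hGcard]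
    _ ≤ (Finset.univ : Finset (Fin n)).card := Finset.card_le_univ _
    _ = n := by simp

def cycOf {s : ℕ} (hs : 0 < s) (cp : Fin (s+1) → Fin n) : ℕ → Fin n :=
  fun m => cp ⟨m % s, Nat.lt_succ_of_lt (Nat.mod_lt m hs)⟩

lemma cycOf_mod {s : ℕ} (hs : 0 < s) (cp : Fin (s+1) → Fin n) (m : ℕ) :
    cycOf hs cp (m % s) = cycOf hs cp m := by
  unfold cycOf; congr 1; exact Fin.ext (Nat.mod_mod_of_dvd m dvd_rfl)

lemma cycOf_zero {s : ℕ} (hs : 0 < s) {cp : Fin (s+1) → Fin n} {v : Fin n}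
    (hcp0 : cp 0 = v) : cycOf hs cp 0 = v := by
  unfold cycOf; rw [← hcp0]; exact congrArg cp (Fin.ext (by simp))

lemma cycOf_add_s {s : ℕ} (hs : 0 < s) (cp : Fin (s+1) → Fin n) (m : ℕ) :
    cycOf hs cp (m + s) = cycOf hs cp m := by
  unfold cycOf; congr 1; exact Fin.ext (by simp [Nat.add_mod_right])

lemma cycOf_step {s : ℕ} (hs : 0 < s) {cp : Fin (s+1) → Fin n} {v : Fin n}
    (hcp : IsEPath E s cp) (hcp0 : cp 0 = v) (hcpl : cp (Fin.last s) = v) (m : ℕ) :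
    W E 1 (cycOf hs cp m) (cycOf hs cp (m+1)) := by
  have halt : m % s < s := Nat.mod_lt m hs
  have hmod : (m+1) % s = (m % s + 1) % s := Nat.ModEq.add_right 1 (Nat.mod_modEq m s).symm
  have hW : W E 1 (cp ⟨m % s, by omega⟩) (cp ⟨m % s + 1, by omega⟩) := by
    have h2 := seg hcp (m % s) (m % s + 1) (by omega) (by omega)
    have h3 : m % s + 1 - (m % s) = 1 := by omega
    rwa [h3] at h2
  unfold cycOf
  rcases eq_or_lt_of_le (Nat.succ_le_of_lt halt) with he | hlt
  · have he' : m % s + 1 = s := he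
    have h1 : (m+1) % s = 0 := by rw [hmod, he', Nat.mod_self]
    have e2 : (⟨(m+1) % s, Nat.lt_succ_of_lt (Nat.mod_lt (m+1) hs)⟩ : Fin (s+1)) = 0 :=
      Fin.ext (by simp [h1])
    rw [e2, hcp0, ← hcpl]
    have e3 : (Fin.last s) = (⟨m % s + 1, by omega⟩ : Fin (s+1)) := Fin.ext (by simp [he'])
    rw [e3]
    exact hW
  · have h1 : (m+1) % s = m % s + 1 := by rw [hmod]; exact Nat.mod_eq_of_lt hlt
    have e2 : (⟨(m+1) % s, Nat.lt_succ_of_lt (Nat.mod_lt (m+1) hs)⟩ : Fin (s+1))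
        = ⟨m % s + 1, by omega⟩ := Fin.ext (by simp [h1])
    rw [e2]
    exact hW

lemma cycOf_walk {s : ℕ} (hs : 0 < s) {cp : Fin (s+1) → Fin n} {v : Fin n}
    (hcp : IsEPath E s cp) (hcp0 : cp 0 = v) (hcpl : cp (Fin.last s) = v) :
    ∀ (q m : ℕ), W E q (cycOf hs cp m) (cycOf hs cp (m+q)) := by
  intro q
  induction q with
  | zero => intro m; rw [Nat.add_zero]; exact W.nil _
  | succ q ih =>
    intro m
    have h1 := (ih m).trans (cycOf_step hs hcp hcp0 hcpl (m + q))
    have h3 : m + (q+1) = m + q + 1 := by omega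
    rw [h3]
    exact h1

lemma cycOf_kloop {s : ℕ} (hs : 0 < s) {cp : Fin (s+1) → Fin n} {v : Fin n}
    (hcp : IsEPath E s cp) (hcp0 : cp 0 = v) (hcpl : cp (Fin.last s) = v) :
    ∀ (k m : ℕ), W E (k * s) (cycOf hs cp m) (cycOf hs cp m) := by
  intro k
  induction k with
  | zero => intro m; rw [Nat.zero_mul]; exact W.nil _
  | succ k ih =>
    intro m
    have h2 := cycOf_walk hs hcp hcp0 hcpl s m
    rw [cycOf_add_s hs cp m] at h2
    have h1 := (ih m).trans h2
    rw [show (k+1)*s = k*s + s from by ring]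
    exact h1

lemma cycOf_mem {s : ℕ} (hs : 0 < s) (cp : Fin (s+1) → Fin n) (m : ℕ) :
    cycOf hs cp m ∈ Finset.image (fun mm : Fin s => cycOf hs cp mm.val) Finset.univ := by
  refine Finset.mem_image.mpr ⟨⟨m % s, Nat.mod_lt m hs⟩, Finset.mem_univ _, ?_⟩
  exact cycOf_mod hs cp m


end walks


lemma key_ineq {n s γ : ℕ} (hγ : 0 < γ) (hγs : γ ∣ s) (hs : 0 < s) (hsn : s ≤ n)
    (hsp : s = n → γ = n) : s * (n - γ) + (n - s) ≤ (n - 1)^2 + 1 := by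
  have hγle : γ ≤ s := Nat.le_of_dvd hs hγs
  rcases eq_or_lt_of_le hsn with he | hlt
  · rw [hsp he, he]; simp
  · -- s < n
    obtain ⟨c, hc⟩ : ∃ c, n = c + 1 := ⟨n - 1, by omega⟩
    obtain ⟨a, ha⟩ : ∃ a, n = s + a := ⟨n - s, by omega⟩
    have ha1 : 1 ≤ a := by omega
    have hns : n - s = a := by omega
    have hn1 : n - 1 = c := by omega
    rcases eq_or_lt_of_le (Nat.succ_le_of_lt hγ) with h1 | h2
    · -- γ = 1
      have hγ1 : γ = 1 := h1.symm
      have hb : n - γ = c := by omega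
      rw [hns, hn1, hb]
      have hsc : s + a = c + 1 := by omega
      zify
      have hc1 : (1:ℤ) ≤ c := by
        have : 2 ≤ n := by omega
        omega
      nlinarith [mul_nonneg (by omega : (0:ℤ) ≤ (a:ℤ) - 1) (by omega : (0:ℤ) ≤ (c:ℤ) - 1)]
    · -- 2 ≤ γ
      obtain ⟨b, hbe⟩ : ∃ b, n = γ + b := ⟨n - γ, by omega⟩
      have hb : n - γ = b := by omega
      rw [hns, hn1, hb]
      rcases le_or_gt c 1 with hcc | hcc
      · -- c ≤ 1 : contradiction since γ ≥ 2, s < n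
        exfalso; omega
      · have hb1 : b + 1 ≤ c := by omega
        have hsle : s ≤ c := by omega
        zify
        nlinarith [mul_le_mul (by omega : (s:ℤ) ≤ c) (by omega : (b:ℤ) ≤ c - 1)
          (by omega : (0:ℤ) ≤ b) (by omega : (0:ℤ) ≤ c)]


/-- for the Boolean incidence matrix `S` of a strongly connected
digraph on `n` nodes with cyclicity `γ`, and any `t ≥ (n-1)² + 1`, the entry
`(S^t)_{ij}` is `1` if `[i] →_t [j]` and `0` otherwise. -/
theorem boolean_power_ultimate {n : ℕ} (E : Fin n → Fin n → Prop)
    (hsc : ∀ i j : Fin n, Reach E i j)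
    (S : Fin n → Fin n → ℝ≥0) (hS : ∀ i j, S i j = if E i j then 1 else 0)
    (t : ℕ) (ht : (n-1)^2 + 1 ≤ t) (i j : Fin n) :
    (ClassAccess E (setGcd (allCycLen E)) t i j → mpow S t i j = 1) ∧
    (¬ ClassAccess E (setGcd (allCycLen E)) t i j → mpow S t i j = 0) := by
  have hR : ∀ a b : Fin n, ∃ k, W E k a b := by
    intro a b
    obtain ⟨k, p, h1, h2, h3⟩ := hsc a b
    exact ⟨k, w_iff_path.mpr ⟨p, h1, h2, h3⟩⟩
  set γ := setGcd (allCycLen E) with hγdef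
  have hmemACL : ∀ L : ℕ, L ∈ allCycLen E ↔ (0 < L ∧ ∃ x, W E L x x) := by
    intro L
    constructor
    · rintro ⟨x, hpos, p, hp⟩
      exact ⟨hpos, x, w_iff_path.mpr ⟨p, hp⟩⟩
    · rintro ⟨hpos, x, hw⟩
      obtain ⟨p, hp⟩ := w_iff_path.mp hw
      exact ⟨x, hpos, p, hp⟩
  have hACLdvd : ∀ L ∈ allCycLen E, γ ∣ L := (setGcd_spec _).1
  have hACLgcd : ∀ e : ℕ, (∀ L ∈ allCycLen E, e ∣ L) → e ∣ γ := (setGcd_spec _).2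
  have dvdClosed : ∀ (L : ℕ) (x : Fin n), W E L x x → γ ∣ L := by
    intro L x h
    rcases Nat.eq_zero_or_pos L with h0 | h0
    · subst h0; exact dvd_zero γ
    · exact hACLdvd L ((hmemACL L).mpr ⟨h0, x, h⟩)
  have cong : ∀ (a b : ℕ) (x y : Fin n), W E a x y → W E b x y → a ≡ b [MOD γ] := by
    intro a b x y h1 h2
    obtain ⟨c, hc⟩ := hR y x
    have d1 : γ ∣ a + c := dvdClosed _ _ (h1.trans hc)
    have d2 : γ ∣ b + c := dvdClosed _ _ (h2.trans hc)
    have e1 : a + c ≡ b + c [MOD γ] :=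
      (Nat.modEq_zero_iff_dvd.mpr d1).trans (Nat.modEq_zero_iff_dvd.mpr d2).symm
    exact Nat.ModEq.add_right_cancel' c e1
  have CAtoEx : ClassAccess E γ t i j → ∃ l, W E l i j ∧ l ≡ t [MOD γ] := by
    rintro ⟨i', j', ⟨k₁, p₁, hp₁, h₁0, h₁l, hk₁⟩, ⟨k₂, p₂, hp₂, h₂0, h₂l, hk₂⟩,
      k, p, hp, hp0, hpl, hk⟩
    have w1 : W E k₁ i i' := w_iff_path.mpr ⟨p₁, hp₁, h₁0, h₁l⟩
    have w2 : W E k₂ j j' := w_iff_path.mpr ⟨p₂, hp₂, h₂0, h₂l⟩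
    have w : W E k i' j' := w_iff_path.mpr ⟨p, hp, hp0, hpl⟩
    obtain ⟨c, hc⟩ := hR j' j
    have hγc : γ ∣ c := by
      have h2 := dvdClosed _ _ (w2.trans hc)
      exact (Nat.dvd_add_right hk₂).mp h2
    refine ⟨k₁ + (k + c), (w1.trans (w.trans hc)), ?_⟩
    have h3 : k₁ + (k + c) ≡ 0 + (k + 0) [MOD γ] :=
      (Nat.modEq_zero_iff_dvd.mpr hk₁).add
        ((Nat.ModEq.refl k).add (Nat.modEq_zero_iff_dvd.mpr hγc))
    have h4 : k₁ + (k + c) ≡ k [MOD γ] := by simpa using h3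
    exact h4.trans hk
  have ExtoCA : W E t i j → ClassAccess E γ t i j := by
    intro hw
    obtain ⟨p, hp⟩ := w_iff_path.mp hw
    exact ⟨i, j, ⟨0, fun _ => i, fun t => t.elim0, rfl, rfl, dvd_zero γ⟩,
      ⟨0, fun _ => j, fun t => t.elim0, rfl, rfl, dvd_zero γ⟩,
      t, p, hp.1, hp.2.1, hp.2.2, Nat.ModEq.refl t⟩
  have main : (∃ l, W E l i j ∧ l ≡ t [MOD γ]) → W E t i j := by
    rintro ⟨l₀, hw₀, hl₀⟩
    by_cases hE : ∃ a b, E a b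
    case neg =>
      exfalso
      push_neg at hE
      have hl00 : l₀ = 0 := by
        rcases l₀ with _ | l
        · rfl
        · obtain ⟨m, hm, _⟩ := w_succ_iff.mp hw₀
          exact absurd hm (hE i m)
      have hγ0 : γ = 0 := by
        have hdvd : (γ + 1) ∣ γ := by
          apply hACLgcd
          intro L hL
          exfalso
          obtain ⟨hp, x, hx⟩ := (hmemACL L).mp hL
          rcases L with _ | L
          · omega
          · obtain ⟨m, hm, _⟩ := w_succ_iff.mp hx
            exact (hE x m) hm
        rcases Nat.eq_zero_or_pos γ with h | h
        · exact h
        · have := Nat.le_of_dvd h hdvd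
          omega
      rw [hl00, hγ0] at hl₀
      have ht0 : 0 = t := by simpa [Nat.ModEq] using hl₀
      omega
    case pos =>
      obtain ⟨a0, b0, hab0⟩ := hE
      obtain ⟨c0, hc0⟩ := hR b0 a0
      have hACLne : (allCycLen E).Nonempty :=
        ⟨1 + c0, (hmemACL _).mpr ⟨by omega, a0, (W.cons hab0 (W.nil b0)).trans hc0⟩⟩
      set s := sInf (allCycLen E) with hsdef
      have hs_mem : s ∈ allCycLen E := Nat.sInf_mem hACLne
      have hs_min : ∀ L ∈ allCycLen E, s ≤ L := fun L hL => Nat.sInf_le hL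
      obtain ⟨hs_pos, v, hv⟩ := (hmemACL s).mp hs_mem
      have hγs : γ ∣ s := hACLdvd s hs_mem
      have hγpos : 0 < γ := by
        rcases Nat.eq_zero_or_pos γ with h | h
        · rw [h, zero_dvd_iff] at hγs
          omega
        · exact h
      have hs_le_n : s ≤ n := by
        by_contra hcon
        push_neg at hcon
        obtain ⟨m, x, hm0, hmn, hmw, _⟩ := w_split_repeat hv hcon
        have := hs_min m ((hmemACL m).mpr ⟨hm0, x, hmw⟩)
        omega
      have hsγn : s = n → γ = n := by
        intro hseq
        have hall : ∀ L, ∀ x : Fin n, W E L x x → n ∣ L := by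
          intro L
          induction L using Nat.strong_induction_on with
          | _ L ih =>
            intro x hw
            rcases Nat.eq_zero_or_pos L with h0 | h0
            · subst h0; exact dvd_zero n
            rcases le_or_gt L n with hLn | hLn
            · have h1 := hs_min L ((hmemACL L).mpr ⟨h0, x, hw⟩)
              have h2 : L = n := by omega
              rw [h2]
            · obtain ⟨m, y, hm0, hmn, hmw, hrest⟩ := w_split_repeat hw hLn
              have d1 : n ∣ m := ih m (by omega) y hmw
              have d2 : n ∣ L - m := ih (L - m) (by omega) x hrest
              have hLm : L = m + (L - m) := by omega
              rw [hLm]; exact Nat.dvd_add d1 d2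
        have h1 : n ∣ γ := hACLgcd n (fun L hL => by
          obtain ⟨hp, x, hw⟩ := (hmemACL L).mp hL
          exact hall L x hw)
        have h2 : γ ∣ n := by rw [← hseq]; exact hγs
        exact Nat.dvd_antisymm h2 h1
      have hB : s * (n - γ) + (n - s) ≤ (n-1)^2 + 1 :=
        key_ineq hγpos hγs hs_pos hs_le_n hsγn
      set D := n - γ with hDdef
      have hsD_le_t : s * D + (n - s) ≤ t := le_trans hB ht
      set ℓ := t - s * D with hℓdef
      have ht_eq : ℓ + s * D = t := by omega
      obtain ⟨cp, hcp, hcp0, hcpl⟩ := w_iff_path.mp hv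
      set cyc : ℕ → Fin n := cycOf hs_pos cp with hcycdef
      set CS : Finset (Fin n) :=
        Finset.image (fun mm : Fin s => cyc mm.val) Finset.univ with hCSdef
      have hcyc_mem : ∀ m, cyc m ∈ CS := fun m => cycOf_mem hs_pos cp m
      have hcyc_walk : ∀ q m, W E q (cyc m) (cyc (m + q)) :=
        cycOf_walk hs_pos hcp hcp0 hcpl
      have hcyc_kloop : ∀ k m, W E (k * s) (cyc m) (cyc m) :=
        cycOf_kloop hs_pos hcp hcp0 hcpl
      have hcyc_inj : ∀ a b, a < b → b < s → cyc a = cyc b → False := by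
        intro a b hab hbs heq
        have h1 := hcyc_walk (b - a) a
        rw [show a + (b - a) = b from by omega, ← heq] at h1
        have h2 := hs_min (b - a) ((hmemACL _).mpr ⟨by omega, cyc a, h1⟩)
        omega
      set eS := {k | ∃ x ∈ CS, W E k i x} with heSdef
      have hESne : eS.Nonempty := by
        obtain ⟨k, hk⟩ := hR i v
        refine ⟨k, v, ?_, hk⟩
        rw [← cycOf_zero hs_pos hcp0]
        exact hcyc_mem 0
      set e := sInf eS with hedef
      have he_mem : e ∈ eS := Nat.sInf_mem hESne
      have he_min : ∀ k, (∃ x ∈ CS, W E k i x) → e ≤ k := fun k hk => Nat.sInf_le hk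
      obtain ⟨x₀, hx₀CS, hwe⟩ := he_mem
      have he_le : e + s ≤ n := by
        obtain ⟨pp, hpp, hpp0, hppl⟩ := w_iff_path.mp hwe
        have hef : ∀ m, ∃ x, m ≤ e → (W E m i x ∧ W E (e - m) x x₀) := by
          intro m
          rcases le_or_gt m e with hm | hm
          · obtain ⟨x, hx1, hx2⟩ := seg_both hpp m hm
            rw [hpp0] at hx1
            rw [hppl] at hx2
            exact ⟨x, fun _ => ⟨hx1, hx2⟩⟩
          · exact ⟨i, fun h => absurd h (by omega)⟩
        choose pf hpf using hef
        have hnotCS : ∀ m, m < e → pf m ∉ CS := by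
          intro m hm hmem
          have h1 := (hpf m (by omega)).1
          have := he_min m ⟨pf m, hmem, h1⟩
          omega
        have hinj : ∀ a b, a < e → b < e → pf a = pf b → a = b := by
          intro a b ha hb heq
          by_contra hne
          have key : ∀ a b, a < b → b < e → pf a = pf b → False := by
            intro a b hab hbe heq
            have h1 := (hpf a (by omega)).1
            have h2 := (hpf b (by omega)).2
            rw [← heq] at h2
            have h3 := h1.trans h2
            have := he_min (a + (e - b)) ⟨x₀, hx₀CS, h3⟩
            omega
          rcases lt_trichotomy a b with h | h | h
          · exact key a b h hb heq
          · exact hne h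
          · exact key b a h ha heq.symm
        exact two_fams_card pf cyc hinj
          (fun a b ha hb hcyceq => by
            by_contra hne
            rcases lt_trichotomy a b with h | h | h
            · exact hcyc_inj a b h hb hcyceq
            · exact hne h
            · exact hcyc_inj b a h ha hcyceq.symm)
          (fun a b ha hb heq => hnotCS a ha (by rw [heq]; exact hcyc_mem b))
      have hℓe : e ≤ ℓ := by omega
      obtain ⟨mf, _, hmf⟩ := Finset.mem_image.mp hx₀CS
      set u := cyc (mf.val + (ℓ - e)) with hudef
      have hwu : W E ℓ i u := by
        have h2 := hcyc_walk (ℓ - e) mf.val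
        rw [hmf] at h2
        have h3 := hwe.trans h2
        rwa [show e + (ℓ - e) = ℓ from by omega] at h3
      have hu_loop : ∀ k, W E (k * s) u u := fun k => hcyc_kloop k _
      obtain ⟨m₁, hm₁⟩ := hR u j
      have hγm₁ : γ ∣ m₁ := by
        have c1 : ℓ + m₁ ≡ l₀ [MOD γ] := cong _ _ i j (hwu.trans hm₁) hw₀
        have c2 : ℓ + m₁ ≡ ℓ + s * D [MOD γ] := by
          rw [ht_eq]
          exact c1.trans hl₀
        have c4 : ℓ + s * D ≡ ℓ + 0 [MOD γ] :=
          (Nat.ModEq.refl ℓ).add (Nat.modEq_zero_iff_dvd.mpr (hγs.mul_right D))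
        have c5 : ℓ + m₁ ≡ ℓ + 0 [MOD γ] := c2.trans c4
        exact Nat.modEq_zero_iff_dvd.mp (Nat.ModEq.add_left_cancel' ℓ c5)
      set Su := {c : ℕ | 0 < c ∧ W E c u u} with hSudef
      have hSu_add : ∀ a ∈ Su, ∀ b ∈ Su, a + b ∈ Su :=
        fun a ha b hb => ⟨Nat.add_pos_left ha.1 b, ha.2.trans hb.2⟩
      have hSu_pos : ∀ x ∈ Su, 0 < x := fun x hx => hx.1
      have hγSu : ∀ c ∈ Su, γ ∣ c := fun c hc => dvdClosed c u hc.2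
      have hSu_gcd : ∀ e' : ℕ, (∀ c ∈ Su, e' ∣ c) → e' ∣ γ := by
        intro e' he'
        apply hACLgcd
        intro L hL
        obtain ⟨hLpos, x, hLx⟩ := (hmemACL L).mp hL
        obtain ⟨a, haw⟩ := hR u x
        obtain ⟨b, hbw⟩ := hR x u
        have h1 : e' ∣ a + b := by
          rcases Nat.eq_zero_or_pos (a + b) with h | h
          · rw [h]; exact dvd_zero e'
          · exact he' _ ⟨h, haw.trans hbw⟩
        have h2 : e' ∣ a + (L + b) := he' _ ⟨by omega, haw.trans (hLx.trans hbw)⟩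
        have h3 := Nat.dvd_sub h2 h1
        rwa [show a + (L + b) - (a + b) = L from by omega] at h3
      obtain ⟨N, hN⟩ := schur_lemma Su hSu_add hSu_pos γ hγpos hγSu hSu_gcd
      set dS := {m' | W E (m' * s) u j} with hdSdef
      have hDSne : dS.Nonempty := by
        set m₂ := m₁ + N + 1 with hm₂def
        have h1 : m₂ ≤ m₂ * s := Nat.le_mul_of_pos_right _ hs_pos
        have hγc : γ ∣ m₂ * s - m₁ := Nat.dvd_sub (hγs.mul_left m₂) hγm₁
        have hc_mem : (m₂ * s - m₁) ∈ Su := hN _ (by omega) hγc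
        refine ⟨m₂, ?_⟩
        have h2 := hc_mem.2.trans hm₁
        rwa [show m₂ * s - m₁ + m₁ = m₂ * s from by omega] at h2
      set d := sInf dS with hddef
      have hd_mem : W E (d * s) u j := Nat.sInf_mem hDSne
      have hd_min : ∀ m', W E (m' * s) u j → d ≤ m' := fun m' hm' => Nat.sInf_le hm'
      have hd_le : d + 1 + (γ - 1) ≤ n := by
        obtain ⟨pq, hpq, hpq0, hpql⟩ := w_iff_path.mp hd_mem
        have hzfe : ∀ a, ∃ x, a ≤ d → (W E (a * s) u x ∧ W E ((d - a) * s) x j) := by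
          intro a
          rcases le_or_gt a d with ha | ha
          · obtain ⟨x, hx1, hx2⟩ := seg_both hpq (a * s) (Nat.mul_le_mul ha (le_refl s))
            rw [hpq0] at hx1
            rw [hpql] at hx2
            rw [show d * s - a * s = (d - a) * s from by rw [Nat.sub_mul]] at hx2
            exact ⟨x, fun _ => ⟨hx1, hx2⟩⟩
          · exact ⟨u, fun h => absurd h (by omega)⟩
        choose zf hzf using hzfe
        have hzinj : ∀ a b, a < d + 1 → b < d + 1 → zf a = zf b → a = b := by
          intro a b ha hb heq
          by_contra hne
          have key : ∀ a b, a < b → b ≤ d → zf a = zf b → False := by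
            intro a b hab hbd heq
            have h1 := (hzf a (by omega)).1
            have h2 := (hzf b hbd).2
            rw [← heq] at h2
            have h3 := h1.trans h2
            rw [show a * s + (d - b) * s = (a + (d - b)) * s from by rw [Nat.add_mul]] at h3
            have := hd_min _ h3
            omega
          rcases lt_trichotomy a b with h | h | h
          · exact key a b h (by omega) heq
          · exact hne h
          · exact key b a h (by omega) heq.symm
        have hxe : ∀ q : ℕ, ∃ x, W E q u x := by
          intro q
          exact ⟨cyc (mf.val + (ℓ - e) + q), hcyc_walk q _⟩
        choose xf hxfW using hxe
        have hxinj : ∀ a b, a < γ - 1 → b < γ - 1 → xf (a+1) = xf (b+1) → a = b := by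
          intro a b ha hb heq
          have hc := cong (a+1) (b+1) u (xf (a+1)) (hxfW (a+1))
            (by rw [heq]; exact hxfW (b+1))
          have h1 : (a+1) % γ = a+1 := Nat.mod_eq_of_lt (by omega)
          have h2 : (b+1) % γ = b+1 := Nat.mod_eq_of_lt (by omega)
          have h3 : (a+1) % γ = (b+1) % γ := hc
          omega
        have hdisj : ∀ a b, a < d + 1 → b < γ - 1 → zf a ≠ xf (b+1) := by
          intro a b ha hb heq
          have hwz := (hzf a (by omega)).1
          have hc := cong (a * s) (b+1) u (zf a) hwz
            (by rw [heq]; exact hxfW (b+1))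
          have h1 : (a * s) % γ = 0 % γ := Nat.modEq_zero_iff_dvd.mpr (hγs.mul_left a)
          have h0 : 0 % γ = 0 := Nat.zero_mod γ
          have h2 : (b+1) % γ = b+1 := Nat.mod_eq_of_lt (by omega)
          have h3 : (a * s) % γ = (b+1) % γ := hc
          omega
        exact two_fams_card zf (fun q => xf (q+1)) hzinj hxinj hdisj
      have hdD : d ≤ D := by omega
      have hpad : W E (D * s) u j := by
        have h1 := (hu_loop (D - d)).trans hd_mem
        rwa [show (D - d) * s + d * s = D * s from by
          rw [← Nat.add_mul]
          congr 1
          omega] at h1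
      have hfin := hwu.trans hpad
      rwa [show ℓ + D * s = t from by rw [Nat.mul_comm]; omega] at hfin
  constructor
  · intro hca
    rw [mpow_eq E S hS]
    rw [if_pos (main (CAtoEx hca))]
  · intro hca
    rw [mpow_eq E S hS]
    rw [if_neg (fun hw => hca (ExtoCA hw))]

end MaxAlg
end
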